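/- (Higher derived brackets, abstract form) Let 𝔤 be a Lie superalgebra with a projector P: 𝔤 → 𝔤 (P² = P) such that ker P and im P are subalgebras and im P is abelian. For odd Δ ∈ 𝔤, define the n-th derived bracket on V = im P by {a₁,…,aₙ}_Δ := P[···[[Δ,a₁],a₂],···,aₙ]. Then the n-th Jacobiator of the derived brackets of Δ equals the n-th derived bracket of Δ²: Jⁿ_Δ(a₁,…,aₙ) = {a₁,…,aₙ}_{Δ²}, where Δ² = ½[Δ,Δ]. -/

import Mathlib

open scoped Classical

/-- The Koszul sign `(-1)^{pq}` for parities `p q : ZMod 2`. -/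
def ksign (p q : ZMod 2) : ℤ := if p = 1 ∧ q = 1 then -1 else 1

/-- A Lie superalgebra over `k`: a `ZMod 2`-graded module with a bilinear bracket
that is graded-antisymmetric and satisfies the graded Jacobi identity
(on homogeneous elements). -/
structure LieSuper (k G : Type) [Field k] [AddCommGroup G] [Module k G] where
  gr : ZMod 2 → Submodule k G
  br : G →ₗ[k] G →ₗ[k] G
  br_gr : ∀ i j x y, x ∈ gr i → y ∈ gr j → br x y ∈ gr (i + j)
  skew : ∀ i j x y, x ∈ gr i → y ∈ gr j → br x y = -(ksign i j • br y x)
  jacobi : ∀ i j x y z, x ∈ gr i → y ∈ gr j →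
    br x (br y z) = br (br x y) z + ksign i j • br y (br x z)

variable {k G : Type} [Field k] [AddCommGroup G] [Module k G]

/-- The `n`-th derived bracket `{a₁,…,aₙ}_D := P[⋯[[D,a₁],a₂],⋯,aₙ]`. -/
def dbr (L : LieSuper k G) (P : G →ₗ[k] G) (D : G) (l : List G) : G :=
  P (l.foldl (fun x a => L.br x a) D)

/-- `σ` is a `(j, n-j)`-shuffle: strictly monotone on the first `j` positions
and on the last `n - j` positions. -/
def IsShuffle {n : ℕ} (j : ℕ) (σ : Equiv.Perm (Fin n)) : Prop :=
  (∀ s t : Fin n, s < t → (t : ℕ) < j → σ s < σ t) ∧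
  (∀ s t : Fin n, s < t → j ≤ (s : ℕ) → σ s < σ t)

/-- The Koszul sign of the permutation `σ` of homogeneous arguments of parities `p`:
the product of `(-1)^{p_i p_j}` over all inversions of `σ`. -/
noncomputable def koszulSign {n : ℕ} (p : Fin n → ZMod 2) (σ : Equiv.Perm (Fin n)) : ℤ :=
  ∏ q ∈ Finset.univ.filter (fun q : Fin n × Fin n => q.1 < q.2 ∧ σ q.2 < σ q.1),
    ksign (p (σ q.1)) (p (σ q.2))

/-- The `n`-th Jacobiator of the derived brackets of `D`:
`Jⁿ(a₁,…,aₙ) = Σ_{j+l=n} Σ_{(j,l)-shuffles σ} ± {{a_{σ(1)},…,a_{σ(j)}}_D, a_{σ(j+1)},…,a_{σ(n)}}_D`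
with Koszul signs. -/
noncomputable def jacobiator (L : LieSuper k G) (P : G →ₗ[k] G) (D : G) {n : ℕ}
    (p : Fin n → ZMod 2) (a : Fin n → G) : G :=
  ∑ j ∈ Finset.range (n + 1),
    ∑ σ ∈ Finset.univ.filter (fun σ : Equiv.Perm (Fin n) => IsShuffle j σ),
      koszulSign p σ •
        dbr L P D
          (dbr L P D (((List.finRange n).take j).map fun i => a (σ i)) ::
            ((List.finRange n).drop j).map fun i => a (σ i))

/-! ### Auxiliary material -/

section KsignLemmas

theorem ksign_sym (p q : ZMod 2) : ksign p q = ksign q p := by revert p q; decide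

@[simp] theorem ksign_zero_left (q : ZMod 2) : ksign 0 q = 1 := by revert q; decide

@[simp] theorem ksign_zero_right (p : ZMod 2) : ksign p 0 = 1 := by revert p; decide

theorem ksign_mul_self (p q : ZMod 2) : ksign p q * ksign p q = 1 := by revert p q; decide

theorem ksign_add_left (p q r : ZMod 2) : ksign (p + q) r = ksign p r * ksign q r := by
  revert p q r; decide

theorem ksign_add_right (p q r : ZMod 2) : ksign p (q + r) = ksign p q * ksign p r := by
  revert p q r; decide

theorem ksign_e1 : ∀ pu pv d : ZMod 2, ksign (pu + pv) d * ksign d pu = ksign d pv := by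
  decide

theorem ksign_e2 : ∀ pu pv d : ZMod 2, ksign (pu + pv) d * (ksign d pu * ksign d pv) = 1 := by
  decide

theorem ksign_e3 : ∀ a b c : ZMod 2, ksign c b * ksign b a = ksign (a + c) b := by
  decide

theorem ksign_e4 : ∀ a px py : ZMod 2, ksign (a + px) py = ksign py a * ksign px py := by
  decide

theorem ksign_e5 : ∀ px py : ZMod 2,
    -(ksign px 1 * ksign (1 + px) (1 + py)) + ksign px py * ksign py 1
      = 2 * ksign py (1 + px) := by
  decide

theorem ksign_smul_cancel (p q : ZMod 2) (x : G) : ksign p q • ksign p q • x = x := by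
  rw [smul_smul, ksign_mul_self, one_smul]

end KsignLemmas

/-- The iterated bracket `[⋯[[z,a₁],a₂],⋯]`. -/
def F (L : LieSuper k G) (z : G) (l : List G) : G := l.foldl (fun x a => L.br x a) z

/-- The total parity of a list of (element, parity) pairs. -/
def psum (l : List (G × ZMod 2)) : ZMod 2 := (l.map Prod.snd).sum

/-- Forget the parities. -/
def mfst (l : List (G × ZMod 2)) : List G := l.map Prod.fst

/-- All (signed) splittings of a list into two complementary sublists; the sign is the
Koszul sign of the inversions between the two blocks. -/
def Spl : List (G × ZMod 2) → List (ℤ × List (G × ZMod 2) × List (G × ZMod 2))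
  | [] => [(1, [], [])]
  | a :: l =>
      ((Spl l).map fun t => (t.1, a :: t.2.1, t.2.2)) ++
      ((Spl l).map fun t => (ksign (psum t.2.1) a.2 * t.1, t.2.1, a :: t.2.2))

section ListWorld

variable (L : LieSuper k G)

@[simp] theorem F_nil (z : G) : F L z [] = z := rfl

@[simp] theorem F_cons (z a : G) (l : List G) : F L z (a :: l) = F L (L.br z a) l := rfl

theorem F_add (z w : G) (l : List G) : F L (z + w) l = F L z l + F L w l := by
  induction l generalizing z w with
  | nil => rfl
  | cons a l ih =>
    rw [F_cons, F_cons, F_cons, map_add, LinearMap.add_apply, ih]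

theorem F_zsmul (c : ℤ) (z : G) (l : List G) : F L (c • z) l = c • F L z l := by
  induction l generalizing z with
  | nil => rfl
  | cons a l ih =>
    rw [F_cons, F_cons, map_zsmul, LinearMap.smul_apply, ih]

theorem F_ksmul (c : k) (z : G) (l : List G) : F L (c • z) l = c • F L z l := by
  induction l generalizing z with
  | nil => rfl
  | cons a l ih =>
    rw [F_cons, F_cons, map_smul, LinearMap.smul_apply, ih]

theorem F_grade (z : G) (i : ZMod 2) (hz : z ∈ L.gr i) (l : List (G × ZMod 2))
    (hl : ∀ e ∈ l, e.1 ∈ L.gr e.2) : F L z (mfst l) ∈ L.gr (i + psum l) := by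
  induction l generalizing z i with
  | nil => simpa [psum, mfst] using hz
  | cons a l ih =>
    have h1 : L.br z a.1 ∈ L.gr (i + a.2) := L.br_gr i a.2 z a.1 hz (hl a (by simp))
    have h2 := ih (L.br z a.1) (i + a.2) h1 (fun e he => hl e (by simp [he]))
    have : i + psum (a :: l) = i + a.2 + psum l := by
      simp [psum, add_assoc]
    rw [this]
    exact h2

theorem rleib (u v c : G) (pu pv d : ZMod 2) (hu : u ∈ L.gr pu) (hv : v ∈ L.gr pv)
    (hc : c ∈ L.gr d) :
    L.br (L.br u v) c = ksign d pv • L.br (L.br u c) v + L.br u (L.br v c) := by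
  have e1 := ksign_e1 pu pv d
  have e2 := ksign_e2 pu pv d
  have hbuv := L.br_gr pu pv u v hu hv
  have s1 := L.skew (pu + pv) d (L.br u v) c hbuv hc
  have j1 := L.jacobi d pu c u v hc hu
  have s2 := L.skew d pu c u hc hu
  have s3 := L.skew d pv c v hc hv
  rw [s2, s3] at j1
  rw [s1, j1]
  simp only [map_neg, map_zsmul, LinearMap.neg_apply, LinearMap.smul_apply, smul_neg,
    neg_neg, smul_add, smul_smul, neg_add]
  rw [e1, e2, one_smul]

theorem master (l : List (G × ZMod 2)) (u v : G) (pu pv : ZMod 2)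
    (hu : u ∈ L.gr pu) (hv : v ∈ L.gr pv) (hl : ∀ e ∈ l, e.1 ∈ L.gr e.2) :
    F L (L.br u v) (mfst l) =
      ((Spl l).map fun t =>
        (t.1 * ksign (psum t.2.1) pv) • L.br (F L u (mfst t.2.1)) (F L v (mfst t.2.2))).sum := by
  induction l generalizing u v pu pv hu hv with
  | nil => simp [Spl, mfst, psum]
  | cons a l ih =>
    have hl' : ∀ e ∈ l, e.1 ∈ L.gr e.2 := fun e he => hl e (List.mem_cons_of_mem _ he)
    have hag := hl a (List.mem_cons_self)
    show F L (L.br u v) (a.1 :: mfst l) = _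
    rw [F_cons, rleib L u v a.1 pu pv a.2 hu hv hag, F_add, F_zsmul,
      ih (L.br u a.1) v (pu + a.2) pv (L.br_gr pu a.2 u a.1 hu hag) hv hl',
      ih u (L.br v a.1) pu (pv + a.2) hu (L.br_gr pv a.2 v a.1 hv hag) hl']
    simp only [Spl, List.map_append, List.sum_append, List.map_map]
    congr 1
    · rw [List.smul_sum, List.map_map]
      apply congrArg List.sum
      apply List.map_congr_left
      intro t _
      simp only [Function.comp]
      rw [smul_smul]
      have hp : psum (a :: t.2.1) = a.2 + psum t.2.1 := by simp [psum]
      rw [hp, ksign_add_left]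
      have hm : mfst (a :: t.2.1) = a.1 :: mfst t.2.1 := rfl
      rw [hm, F_cons]
      congr 1
      ring
    · apply congrArg List.sum
      apply List.map_congr_left
      intro t _
      simp only [Function.comp]
      have hp : ksign (psum t.2.1) (pv + a.2)
          = ksign (psum t.2.1) pv * ksign (psum t.2.1) a.2 := ksign_add_right _ _ _
      rw [hp]
      have hm : mfst (a :: t.2.2) = a.1 :: mfst t.2.2 := rfl
      rw [hm, F_cons]
      congr 1
      ring

theorem Spl_mem {l : List (G × ZMod 2)} {t} (ht : t ∈ Spl l) :
    (∀ e ∈ t.2.1, e ∈ l) ∧ (∀ e ∈ t.2.2, e ∈ l) := by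
  induction l generalizing t with
  | nil =>
    simp only [Spl, List.mem_singleton] at ht
    subst ht
    simp
  | cons a l ih =>
    simp only [Spl, List.mem_append, List.mem_map] at ht
    rcases ht with ⟨u, hu, rfl⟩ | ⟨u, hu, rfl⟩ <;>
      obtain ⟨h1, h2⟩ := ih hu
    · constructor
      · intro e he
        rcases List.mem_cons.1 he with rfl | he
        · exact List.mem_cons_self
        · exact List.mem_cons_of_mem _ (h1 e he)
      · intro e he
        exact List.mem_cons_of_mem _ (h2 e he)
    · constructor
      · intro e he
        exact List.mem_cons_of_mem _ (h1 e he)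
      · intro e he
        rcases List.mem_cons.1 he with rfl | he
        · exact List.mem_cons_self
        · exact List.mem_cons_of_mem _ (h2 e he)

/-- The swap involution on splittings. -/
def swapT (t : ℤ × List (G × ZMod 2) × List (G × ZMod 2)) :
    ℤ × List (G × ZMod 2) × List (G × ZMod 2) :=
  (t.1 * ksign (psum t.2.1) (psum t.2.2), t.2.2, t.2.1)

theorem swapT_swapT (t : ℤ × List (G × ZMod 2) × List (G × ZMod 2)) :
    swapT (swapT t) = t := by
  obtain ⟨s, x, y⟩ := t
  simp only [swapT, Prod.mk.injEq, and_true]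
  rw [ksign_sym (psum y) (psum x)]
  linear_combination s * ksign_mul_self (psum x) (psum y)

theorem Spl_swap_perm (l : List (G × ZMod 2)) : ((Spl l).map swapT).Perm (Spl l) := by
  induction l with
  | nil => simp [Spl, swapT, psum]
  | cons a l ih =>
    simp only [Spl, List.map_append, List.map_map]
    have e1 : ((Spl l).map
        (swapT ∘ (fun t : ℤ × List (G × ZMod 2) × List (G × ZMod 2) =>
          (t.1, a :: t.2.1, t.2.2)))) =
        ((Spl l).map ((fun t : ℤ × List (G × ZMod 2) × List (G × ZMod 2) =>
          (ksign (psum t.2.1) a.2 * t.1, t.2.1, a :: t.2.2)) ∘ swapT)) := by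
      apply List.map_congr_left
      intro t _
      simp only [Function.comp, swapT]
      have hp : psum (a :: t.2.1) = a.2 + psum t.2.1 := by simp [psum]
      rw [hp, ksign_e4]
      simp only [Prod.mk.injEq, and_true]
      ring
    have e2 : ((Spl l).map
        (swapT ∘ (fun t : ℤ × List (G × ZMod 2) × List (G × ZMod 2) =>
          (ksign (psum t.2.1) a.2 * t.1, t.2.1, a :: t.2.2)))) =
        ((Spl l).map ((fun t : ℤ × List (G × ZMod 2) × List (G × ZMod 2) =>
          (t.1, a :: t.2.1, t.2.2)) ∘ swapT)) := by
      apply List.map_congr_left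
      intro t _
      simp only [Function.comp, swapT]
      have hp : psum (a :: t.2.2) = a.2 + psum t.2.2 := by simp [psum]
      rw [hp, ksign_add_right]
      simp only [Prod.mk.injEq, and_true]
      linear_combination (t.1 * ksign (psum t.2.1) (psum t.2.2)) *
        ksign_mul_self (psum t.2.1) a.2
    rw [e1, e2]
    have p1 := ih.map (fun t : ℤ × List (G × ZMod 2) × List (G × ZMod 2) =>
      (ksign (psum t.2.1) a.2 * t.1, t.2.1, a :: t.2.2))
    have p2 := ih.map (fun t : ℤ × List (G × ZMod 2) × List (G × ZMod 2) =>
      (t.1, a :: t.2.1, t.2.2))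
    rw [List.map_map] at p1 p2
    exact ((p1.append p2).trans List.perm_append_comm)

theorem sum_swap {M : Type} [AddCommMonoid M] (l : List (G × ZMod 2))
    (g : ℤ × List (G × ZMod 2) × List (G × ZMod 2) → M) :
    ((Spl l).map g).sum = ((Spl l).map (fun t => g (swapT t))).sum := by
  have h := ((Spl_swap_perm l).map g).sum_eq
  rw [List.map_map] at h
  exact h.symm

theorem lemC (P : G →ₗ[k] G) (habel : ∀ x y, L.br (P x) (P y) = 0)
    (b : G) (e : ZMod 2) (hb : b ∈ L.gr e) (hbP : P b = b)
    (y : List (G × ZMod 2)) (hy : ∀ ee ∈ y, ee.1 ∈ L.gr ee.2 ∧ P ee.1 = ee.1)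
    (w : G) (pw : ZMod 2) (hw : w ∈ L.gr pw) :
    L.br (F L w (mfst y)) b = ksign (psum y) e • F L (L.br w b) (mfst y) := by
  induction y generalizing w pw hw with
  | nil =>
    simp [psum, mfst]
  | cons a y ih =>
    have hy' : ∀ ee ∈ y, ee.1 ∈ L.gr ee.2 ∧ P ee.1 = ee.1 :=
      fun ee hee => hy ee (List.mem_cons_of_mem _ hee)
    obtain ⟨hag, haP⟩ := hy a (List.mem_cons_self)
    have hzero : L.br a.1 b = 0 := by
      rw [← haP, ← hbP]; exact habel a.1 b
    have step : L.br (L.br w a.1) b = ksign e a.2 • L.br (L.br w b) a.1 := by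
      rw [rleib L w a.1 b pw a.2 e hw hag hb, hzero, map_zero, add_zero]
    have key := ih hy' (L.br w a.1) (pw + a.2) (L.br_gr pw a.2 w a.1 hw hag)
    show L.br (F L (L.br w a.1) (mfst y)) b = _
    rw [key, step, F_zsmul, smul_smul, ksign_e3]
    have : psum (a :: y) = a.2 + psum y := by simp [psum]
    rw [this]
    rfl

theorem Pred (P : G →ₗ[k] G) (hP : ∀ x, P (P x) = P x)
    (hker : ∀ x y, P x = 0 → P y = 0 → P (L.br x y) = 0)
    (habel : ∀ x y, L.br (P x) (P y) = 0) (X Y : G) :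
    P (L.br X Y) = P (L.br (P X) Y) + P (L.br X (P Y)) := by
  have h1 : P (L.br (X - P X) (Y - P Y)) = 0 :=
    hker _ _ (by rw [map_sub, hP, sub_self]) (by rw [map_sub, hP, sub_self])
  have h2 : L.br (P X) (P Y) = 0 := habel X Y
  have h3 : L.br (X - P X) (Y - P Y)
      = L.br X Y - L.br X (P Y) - L.br (P X) Y + L.br (P X) (P Y) := by
    simp only [map_sub, LinearMap.sub_apply]
    abel
  rw [h3, h2, add_zero, map_sub, map_sub] at h1
  rw [sub_sub, sub_eq_zero] at h1
  rw [h1, add_comm]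

theorem listMain [CharZero k] (P : G →ₗ[k] G) (hP : ∀ x, P (P x) = P x)
    (hPgr : ∀ (i : ZMod 2) (x : G), x ∈ L.gr i → P x ∈ L.gr i)
    (hker : ∀ x y, P x = 0 → P y = 0 → P (L.br x y) = 0)
    (habel : ∀ x y, L.br (P x) (P y) = 0)
    (D : G) (hD : D ∈ L.gr 1)
    (l : List (G × ZMod 2)) (hl : ∀ e ∈ l, e.1 ∈ L.gr e.2 ∧ P e.1 = e.1) :
    ((Spl l).map fun t =>
        t.1 • P (F L (L.br D (P (F L D (mfst t.2.1)))) (mfst t.2.2))).sum =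
      P (F L ((1 / 2 : k) • L.br D D) (mfst l)) := by
  have hgr : ∀ t ∈ Spl l, (∀ e ∈ t.2.1, e.1 ∈ L.gr e.2 ∧ P e.1 = e.1) ∧
      (∀ e ∈ t.2.2, e.1 ∈ L.gr e.2 ∧ P e.1 = e.1) := by
    intro t ht
    obtain ⟨h1, h2⟩ := Spl_mem ht
    exact ⟨fun e he => hl e (h1 e he), fun e he => hl e (h2 e he)⟩
  have hX : ∀ t ∈ Spl l, F L D (mfst t.2.1) ∈ L.gr (1 + psum t.2.1) :=
    fun t ht => F_grade L D 1 hD _ (fun e he => ((hgr t ht).1 e he).1)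
  have hY : ∀ t ∈ Spl l, F L D (mfst t.2.2) ∈ L.gr (1 + psum t.2.2) :=
    fun t ht => F_grade L D 1 hD _ (fun e he => ((hgr t ht).2 e he).1)
  -- rewrite the left-hand side terms via `lemC`
  have hterm : ∀ t ∈ Spl l,
      t.1 • P (F L (L.br D (P (F L D (mfst t.2.1)))) (mfst t.2.2))
        = (t.1 * ksign (psum t.2.2) (1 + psum t.2.1)) •
            P (L.br (F L D (mfst t.2.2)) (P (F L D (mfst t.2.1)))) := by
    intro t ht
    have hb : P (F L D (mfst t.2.1)) ∈ L.gr (1 + psum t.2.1) := hPgr _ _ (hX t ht)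
    have hc := lemC L P habel _ (1 + psum t.2.1) hb (hP _) t.2.2 (hgr t ht).2 D 1 hD
    have hc' : F L (L.br D (P (F L D (mfst t.2.1)))) (mfst t.2.2)
        = ksign (psum t.2.2) (1 + psum t.2.1) •
            L.br (F L D (mfst t.2.2)) (P (F L D (mfst t.2.1))) := by
      rw [hc, ksign_smul_cancel]
    rw [hc', map_zsmul, smul_smul]
  rw [List.map_congr_left hterm]
  -- rewrite the right-hand side via the master formula
  rw [F_ksmul, map_smul, master L l D D 1 1 hD hD (fun e he => (hl e he).1),
    map_list_sum, List.map_map]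
  have h2 : ∀ t ∈ Spl l,
      (⇑P ∘ fun t => (t.1 * ksign (psum t.2.1) 1) •
        L.br (F L D (mfst t.2.1)) (F L D (mfst t.2.2))) t
      = (-(t.1 * ksign (psum t.2.1) 1 *
            ksign (1 + psum t.2.1) (1 + psum t.2.2))) •
          P (L.br (F L D (mfst t.2.2)) (P (F L D (mfst t.2.1))))
        + (t.1 * ksign (psum t.2.1) 1) •
          P (L.br (F L D (mfst (swapT t).2.2)) (P (F L D (mfst (swapT t).2.1)))) := by
    intro t ht
    simp only [Function.comp, map_zsmul]
    rw [Pred L P hP hker habel, smul_add]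
    congr 1
    have hsk := L.skew (1 + psum t.2.1) (1 + psum t.2.2)
      (P (F L D (mfst t.2.1))) (F L D (mfst t.2.2)) (hPgr _ _ (hX t ht)) (hY t ht)
    rw [hsk, map_neg, map_zsmul]
    rw [smul_neg, smul_smul]
    try rw [neg_smul]
  rw [List.map_congr_left h2, List.sum_map_add]
  rw [sum_swap l (fun t => (t.1 * ksign (psum t.2.1) 1) •
    P (L.br (F L D (mfst (swapT t).2.2)) (P (F L D (mfst (swapT t).2.1)))))]
  have h3 : ∀ t ∈ Spl l,
      ((swapT t).1 * ksign (psum (swapT t).2.1) 1) •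
        P (L.br (F L D (mfst (swapT (swapT t)).2.2)) (P (F L D (mfst (swapT (swapT t)).2.1))))
      = ((t.1 * ksign (psum t.2.1) (psum t.2.2)) * ksign (psum t.2.2) 1) •
        P (L.br (F L D (mfst t.2.2)) (P (F L D (mfst t.2.1)))) := by
    intro t _
    simp only [swapT_swapT, swapT]
  rw [List.map_congr_left h3, ← List.sum_map_add]
  have h4 : ∀ t ∈ Spl l,
      (-(t.1 * ksign (psum t.2.1) 1 * ksign (1 + psum t.2.1) (1 + psum t.2.2))) •
          P (L.br (F L D (mfst t.2.2)) (P (F L D (mfst t.2.1))))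
        + ((t.1 * ksign (psum t.2.1) (psum t.2.2)) * ksign (psum t.2.2) 1) •
          P (L.br (F L D (mfst t.2.2)) (P (F L D (mfst t.2.1))))
      = (2 : ℤ) • ((t.1 * ksign (psum t.2.2) (1 + psum t.2.1)) •
          P (L.br (F L D (mfst t.2.2)) (P (F L D (mfst t.2.1))))) := by
    intro t _
    rw [← add_smul, smul_smul]
    congr 1
    linear_combination t.1 * ksign_e5 (psum t.2.1) (psum t.2.2)
  rw [List.map_congr_left h4]
  have h5 : ((Spl l).map (fun t => (2 : ℤ) •
      ((t.1 * ksign (psum t.2.2) (1 + psum t.2.1)) •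
        P (L.br (F L D (mfst t.2.2)) (P (F L D (mfst t.2.1))))))) =
      (((Spl l).map (fun t => (t.1 * ksign (psum t.2.2) (1 + psum t.2.1)) •
        P (L.br (F L D (mfst t.2.2)) (P (F L D (mfst t.2.1)))))).map
          (fun x => (2 : ℤ) • x)) := by
    rw [List.map_map]
    rfl
  rw [h5, ← List.smul_sum]
  generalize ((Spl l).map (fun t => (t.1 * ksign (psum t.2.2) (1 + psum t.2.1)) •
    P (L.br (F L D (mfst t.2.2)) (P (F L D (mfst t.2.1)))))).sum = s
  rw [← Int.cast_smul_eq_zsmul k (2 : ℤ) s, smul_smul]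
  norm_num

end ListWorld

/-! ### The combinatorial bridge -/

section Bridge

variable {n : ℕ}

/-- Koszul sign of a boolean selection. -/
noncomputable def ksgn (p : Fin n → ZMod 2) (c : Fin n → Bool) : ℤ :=
  ∏ q ∈ Finset.univ.filter
      (fun q : Fin n × Fin n => c q.1 = true ∧ c q.2 = false ∧ q.2 < q.1),
    ksign (p q.1) (p q.2)

/-- The sublist selected by a boolean function. -/
def sel (a : Fin n → G) (p : Fin n → ZMod 2) (c : Fin n → Bool) (b : Bool) :
    List (G × ZMod 2) :=
  ((List.finRange n).filter (fun i => c i == b)).map (fun i => (a i, p i))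

@[simp] theorem beq_tt (b : Bool) : (b == true) = b := by cases b <;> rfl

@[simp] theorem beq_ff (b : Bool) : (b == false) = !b := by cases b <;> rfl

theorem sel_cons (a : Fin (n + 1) → G) (p : Fin (n + 1) → ZMod 2) (b : Bool)
    (c : Fin n → Bool) (tb : Bool) :
    sel a p (Fin.cons b c) tb =
      (if b == tb then [(a 0, p 0)] else []) ++
        sel (a ∘ Fin.succ) (p ∘ Fin.succ) c tb := by
  unfold sel
  rw [List.finRange_succ, List.filter_cons, List.filter_map]
  have hc : ((fun i => (Fin.cons b c : Fin (n + 1) → Bool) i == tb) ∘ Fin.succ)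
      = (fun i => c i == tb) := by
    funext i
    simp [Fin.cons_succ]
  rw [hc]
  simp only [Fin.cons_zero]
  by_cases hb : (b == tb) = true
  · rw [if_pos hb, if_pos hb, List.map_cons, List.map_map]
    rfl
  · rw [if_neg hb, if_neg hb, List.nil_append, List.map_map]
    rfl

theorem prod_ksign (d : ZMod 2) :
    ∀ (n : ℕ) (c : Fin n → Bool) (q : Fin n → ZMod 2),
    (∏ w : Fin n, if c w = true then ksign (q w) d else 1) =
      ksign ((((List.finRange n).filter (fun i => c i)).map q).sum) d := by
  intro n
  induction n with
  | zero => intro c q; simp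
  | succ n ih =>
    intro c q
    rw [Fin.prod_univ_succ, List.finRange_succ, List.filter_cons, List.filter_map]
    have hc : ((fun i => c i) ∘ Fin.succ) = (fun i => c i.succ) := rfl
    rw [hc, ih (fun w => c w.succ) (fun w => q w.succ)]
    by_cases h0 : c 0 = true
    · rw [if_pos h0, if_pos h0, List.map_cons, List.sum_cons, List.map_map]
      rw [ksign_add_left]
      rfl
    · rw [if_neg h0, if_neg h0, one_mul, List.map_map]
      rfl

theorem ksgn_cons (p : Fin (n + 1) → ZMod 2) (b : Bool) (c : Fin n → Bool) :
    ksgn p (Fin.cons b c) =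
      (if b then 1 else
        ∏ w : Fin n, if c w = true then ksign (p w.succ) (p 0) else 1) *
        ksgn (p ∘ Fin.succ) c := by
  unfold ksgn
  rw [Finset.prod_filter, Fintype.prod_prod_type, Fin.prod_univ_succ]
  have h0 : (∏ v : Fin (n + 1),
      if (Fin.cons b c : Fin (n + 1) → Bool) 0 = true ∧ (Fin.cons b c : Fin (n + 1) → Bool) v = false ∧ v < 0 then
        ksign (p 0) (p v) else 1) = 1 := by
    apply Finset.prod_eq_one
    intro v _
    exact if_neg (fun h => Fin.not_lt_zero v h.2.2)
  rw [h0, one_mul]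
  have h1 : ∀ u : Fin n, (∏ v : Fin (n + 1),
      if (Fin.cons b c : Fin (n + 1) → Bool) u.succ = true ∧ (Fin.cons b c : Fin (n + 1) → Bool) v = false ∧ v < u.succ then
        ksign (p u.succ) (p v) else 1)
      = (if c u = true ∧ b = false then ksign (p u.succ) (p 0) else 1) *
        ∏ v : Fin n, if c u = true ∧ c v = false ∧ v < u then
          ksign (p u.succ) (p v.succ) else 1 := by
    intro u
    rw [Fin.prod_univ_succ]
    congr 1
    · simp [Fin.cons_succ, Fin.cons_zero, Fin.succ_pos u]
    · apply Finset.prod_congr rfl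
      intro v _
      simp [Fin.cons_succ, Fin.succ_lt_succ_iff]
  calc (∏ u : Fin n, ∏ v : Fin (n + 1),
        if (Fin.cons b c : Fin (n + 1) → Bool) u.succ = true ∧ (Fin.cons b c : Fin (n + 1) → Bool) v = false ∧ v < u.succ then
          ksign (p u.succ) (p v) else 1)
      = ∏ u : Fin n, ((if c u = true ∧ b = false then ksign (p u.succ) (p 0) else 1) *
          ∏ v : Fin n, if c u = true ∧ c v = false ∧ v < u then
            ksign (p u.succ) (p v.succ) else 1) := Finset.prod_congr rfl (fun u _ => h1 u)
    _ = (∏ u : Fin n, if c u = true ∧ b = false then ksign (p u.succ) (p 0) else 1) *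
          ∏ u : Fin n, ∏ v : Fin n, if c u = true ∧ c v = false ∧ v < u then
            ksign (p u.succ) (p v.succ) else 1 := Finset.prod_mul_distrib
    _ = _ := by
        congr 1
        · by_cases hb : b = true
          · subst hb
            rw [if_pos rfl]
            apply Finset.prod_eq_one
            intro u _
            exact if_neg (fun h => by simp at h)
          · have hb' : b = false := by revert hb; cases b <;> simp
            subst hb'
            rw [if_neg (by simp)]
            apply Finset.prod_congr rfl
            intro u _
            congr 1
            simp
        · rw [Finset.prod_filter, Fintype.prod_prod_type]
          rfl

theorem psum_sel (a : Fin n → G) (p : Fin n → ZMod 2) (c : Fin n → Bool) :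
    psum (sel a p c true) = (((List.finRange n).filter (fun i => c i)).map p).sum := by
  unfold psum sel
  rw [List.map_map]
  have h1 : List.filter (fun i => c i == true) (List.finRange n)
      = List.filter (fun i => c i) (List.finRange n) :=
    List.filter_congr (fun x _ => by simp)
  rw [h1]
  rfl

def bconsEquiv (n : ℕ) : (Bool × (Fin n → Bool)) ≃ (Fin (n + 1) → Bool) where
  toFun := fun y => Fin.cons y.1 y.2
  invFun := fun c => (c 0, fun w => c w.succ)
  left_inv := fun y => by
    refine Prod.ext ?_ ?_
    · simp
    · funext w; simp
  right_inv := fun c => by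
    funext i
    exact congrFun (Fin.cons_self_tail c) i

@[simp] theorem bconsEquiv_apply (n : ℕ) (y : Bool × (Fin n → Bool)) :
    bconsEquiv n y = Fin.cons y.1 y.2 := rfl

theorem bridge2 : ∀ (n : ℕ) (a : Fin n → G) (p : Fin n → ZMod 2)
    (T : List (G × ZMod 2) → List (G × ZMod 2) → G),
    ∑ c : Fin n → Bool, ksgn p c • T (sel a p c true) (sel a p c false) =
      ((Spl (List.ofFn fun i => (a i, p i))).map (fun t => t.1 • T t.2.1 t.2.2)).sum := by
  intro n
  induction n with
  | zero =>
    intro a p T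
    rw [Fintype.sum_unique]
    simp [ksgn, sel, Spl]
  | succ n ih =>
    intro a p T
    rw [← Equiv.sum_comp (bconsEquiv n)
      (fun c => ksgn p c • T (sel a p c true) (sel a p c false))]
    simp only [bconsEquiv_apply]
    rw [Fintype.sum_prod_type, Fintype.sum_bool]
    have lst : List.ofFn (fun i : Fin (n+1) => (a i, p i))
        = (a 0, p 0) :: List.ofFn (fun i : Fin n => ((a ∘ Fin.succ) i, (p ∘ Fin.succ) i)) := by
      rw [List.ofFn_succ]
      rfl
    rw [lst]
    simp only [Spl, List.map_append, List.sum_append, List.map_map]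
    congr 1
    · -- the `true` branch
      have hterm : ∀ c : Fin n → Bool, ksgn p (Fin.cons true c) •
          T (sel a p (Fin.cons true c) true) (sel a p (Fin.cons true c) false)
        = ksgn (p ∘ Fin.succ) c •
            T ((a 0, p 0) :: sel (a ∘ Fin.succ) (p ∘ Fin.succ) c true)
              (sel (a ∘ Fin.succ) (p ∘ Fin.succ) c false) := by
        intro c
        rw [ksgn_cons, sel_cons, sel_cons]
        norm_num
      rw [Finset.sum_congr rfl (fun c _ => hterm c)]
      rw [ih (a ∘ Fin.succ) (p ∘ Fin.succ)
        (fun x y => T ((a 0, p 0) :: x) y)]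
      rfl
    · -- the `false` branch
      have hterm : ∀ c : Fin n → Bool, ksgn p (Fin.cons false c) •
          T (sel a p (Fin.cons false c) true) (sel a p (Fin.cons false c) false)
        = ksgn (p ∘ Fin.succ) c •
            (ksign (psum (sel (a ∘ Fin.succ) (p ∘ Fin.succ) c true)) (p 0) •
              T (sel (a ∘ Fin.succ) (p ∘ Fin.succ) c true)
                ((a 0, p 0) :: sel (a ∘ Fin.succ) (p ∘ Fin.succ) c false)) := by
        intro c
        rw [ksgn_cons, sel_cons, sel_cons]
        have hpr : (∏ w : Fin n, if c w = true then ksign (p w.succ) (p 0) else 1)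
            = ksign (psum (sel (a ∘ Fin.succ) (p ∘ Fin.succ) c true)) (p 0) := by
          rw [prod_ksign (p 0) n c (fun w => p w.succ),
            psum_sel (a ∘ Fin.succ) (p ∘ Fin.succ) c]
          rfl
        rw [if_neg (by simp), hpr]
        norm_num
        rw [smul_smul, mul_comm]
      rw [Finset.sum_congr rfl (fun c _ => hterm c)]
      rw [ih (a ∘ Fin.succ) (p ∘ Fin.succ)
        (fun x y => ksign (psum x) (p 0) • T x ((a 0, p 0) :: y))]
      apply congrArg List.sum
      apply List.map_congr_left
      intro t _
      simp only [Function.comp]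
      rw [smul_smul, mul_comm]

/-! #### from shuffles to boolean selections -/

def cList (c : Fin n → Bool) : List (Fin n) :=
  (List.finRange n).filter c ++ (List.finRange n).filter (fun v => !c v)

theorem cList_perm (c : Fin n → Bool) : (cList c).Perm (List.finRange n) :=
  List.filter_append_perm _ _

theorem cList_length (c : Fin n → Bool) : (cList c).length = n := by
  rw [(cList_perm c).length_eq, List.length_finRange]

theorem cList_nodup (c : Fin n → Bool) : (cList c).Nodup :=
  (cList_perm c).nodup_iff.mpr (List.nodup_finRange n)

/-- Number of `true`s. -/
def jlen (c : Fin n → Bool) : ℕ := ((List.finRange n).filter c).length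

theorem jlen_le (c : Fin n → Bool) : jlen c ≤ n := by
  have := List.length_filter_le c (List.finRange n)
  rwa [List.length_finRange] at this

theorem cList_length_eq (c : Fin n → Bool) :
    jlen c + ((List.finRange n).filter (fun v => !c v)).length = n := by
  have := cList_length c
  rw [cList, List.length_append] at this
  exact this

/-- The shuffle permutation associated with a boolean selection. -/
noncomputable def cPerm (c : Fin n → Bool) : Equiv.Perm (Fin n) :=
  Equiv.ofBijective (fun q => (cList c).get (Fin.cast (cList_length c).symm q))
    (Finite.injective_iff_bijective.mp
      (fun q1 q2 h => by
        have h2 := ((cList_nodup c).get_inj_iff).mp h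
        have h3 := congrArg Fin.val h2
        exact Fin.ext h3))

theorem cPerm_apply (c : Fin n → Bool) (q : Fin n) :
    cPerm c q = (cList c).get (Fin.cast (cList_length c).symm q) := rfl

theorem cPerm_shuffle (c : Fin n → Bool) : IsShuffle (jlen c) (cPerm c) := by
  have hpw1 : List.Pairwise (· < ·) ((List.finRange n).filter c) :=
    (List.Pairwise.sublist (List.filter_sublist) (List.pairwise_lt_finRange n))
  have hpw2 : List.Pairwise (· < ·) ((List.finRange n).filter (fun v => !c v)) :=
    (List.Pairwise.sublist (List.filter_sublist) (List.pairwise_lt_finRange n))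
  constructor
  · intro s t hst ht
    rw [cPerm_apply, cPerm_apply]
    have hs : (s : ℕ) < jlen c := lt_trans (Fin.lt_def.mp hst) ht
    show ((List.finRange n).filter c ++
        (List.finRange n).filter (fun v => !c v))[(s : ℕ)]'_
      < ((List.finRange n).filter c ++
        (List.finRange n).filter (fun v => !c v))[(t : ℕ)]'_
    erw [List.getElem_append_left hs, List.getElem_append_left ht]
    exact List.pairwise_iff_getElem.mp hpw1 _ _ _ _ (Fin.lt_def.mp hst)
  · intro s t hst hs
    rw [cPerm_apply, cPerm_apply]
    have ht : jlen c ≤ (t : ℕ) := le_trans hs (le_of_lt (Fin.lt_def.mp hst))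
    have hn := cList_length_eq c
    have htl := t.isLt
    have hsl := s.isLt
    have hst' := Fin.lt_def.mp hst
    show ((List.finRange n).filter c ++
        (List.finRange n).filter (fun v => !c v))[(s : ℕ)]'_
      < ((List.finRange n).filter c ++
        (List.finRange n).filter (fun v => !c v))[(t : ℕ)]'_
    erw [List.getElem_append_right hs, List.getElem_append_right ht]
    apply List.pairwise_iff_getElem.mp hpw2
    have hjl : jlen c = ((List.finRange n).filter c).length := rfl
    omega

theorem mem_take_finRange (j : ℕ) (q : Fin n) :
    q ∈ (List.finRange n).take j ↔ (q : ℕ) < j := by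
  rw [List.mem_iff_getElem]
  constructor
  · rintro ⟨i, h, rfl⟩
    have hl : i < min j n := by
      have := h; rwa [List.length_take, List.length_finRange] at this
    rw [List.getElem_take, List.getElem_finRange]
    simpa using lt_of_lt_of_le hl (min_le_left _ _)
  · intro h
    refine ⟨(q : ℕ), ?_, ?_⟩
    · rw [List.length_take, List.length_finRange]
      exact lt_min h q.isLt
    · rw [List.getElem_take, List.getElem_finRange]
      exact Fin.ext rfl

theorem mem_drop_finRange (j : ℕ) (q : Fin n) :
    q ∈ (List.finRange n).drop j ↔ j ≤ (q : ℕ) := by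
  rw [List.mem_iff_getElem]
  constructor
  · rintro ⟨i, h, rfl⟩
    rw [List.getElem_drop, List.getElem_finRange]
    simp
  · intro h
    have hq := q.isLt
    refine ⟨(q : ℕ) - j, ?_, ?_⟩
    · rw [List.length_drop, List.length_finRange]
      omega
    · rw [List.getElem_drop, List.getElem_finRange]
      exact Fin.ext (by simp; omega)

theorem shuffle_take (j : ℕ) (hj : j ≤ n) (σ : Equiv.Perm (Fin n)) (hσ : IsShuffle j σ) :
    ((List.finRange n).take j).map σ
      = (List.finRange n).filter (fun v => decide ((σ.symm v : ℕ) < j)) := by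
  haveI : IsAntisymm (Fin n) (· < ·) := ⟨fun a b h1 h2 => absurd h2 (asymm h1)⟩
  refine (fun hp h1 h2 => List.Perm.eq_of_pairwise' (r := (· < ·)) h1 h2 hp) ?_ ?_ ?_
  · apply List.perm_of_nodup_nodup_toFinset_eq
    · exact List.Nodup.map σ.injective
        ((List.take_sublist _ _).nodup (List.nodup_finRange n))
    · exact ((List.filter_sublist).nodup (List.nodup_finRange n))
    · ext v
      simp only [List.mem_toFinset, List.mem_map, List.mem_filter, mem_take_finRange,
        List.mem_finRange, true_and, decide_eq_true_eq]
      constructor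
      · rintro ⟨q, hq, rfl⟩
        rwa [Equiv.symm_apply_apply]
      · intro h
        exact ⟨σ.symm v, h, σ.apply_symm_apply v⟩
  · show List.Pairwise _ _
    rw [List.pairwise_iff_getElem]
    intro i1 i2 h1 h2 h12
    have hl : (((List.finRange n).take j).map σ).length = min j n := by
      rw [List.length_map, List.length_take, List.length_finRange]
    rw [hl] at h1 h2
    have e1 : (((List.finRange n).take j).map σ)[i1]'(by rw [hl]; exact h1)
        = σ ⟨i1, lt_of_lt_of_le h1 (min_le_right _ _)⟩ := by
      rw [List.getElem_map, List.getElem_take, List.getElem_finRange]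
      rfl
    have e2 : (((List.finRange n).take j).map σ)[i2]'(by rw [hl]; exact h2)
        = σ ⟨i2, lt_of_lt_of_le h2 (min_le_right _ _)⟩ := by
      rw [List.getElem_map, List.getElem_take, List.getElem_finRange]
      rfl
    rw [e1, e2]
    exact hσ.1 _ _ (by simpa [Fin.lt_def] using h12)
      (lt_of_lt_of_le h2 (min_le_left _ _))
  · show List.Pairwise _ _
    exact (List.Pairwise.sublist (List.filter_sublist) (List.pairwise_lt_finRange n))

theorem shuffle_drop (j : ℕ) (hj : j ≤ n) (σ : Equiv.Perm (Fin n)) (hσ : IsShuffle j σ) :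
    ((List.finRange n).drop j).map σ
      = (List.finRange n).filter (fun v => !(decide ((σ.symm v : ℕ) < j))) := by
  haveI : IsAntisymm (Fin n) (· < ·) := ⟨fun a b h1 h2 => absurd h2 (asymm h1)⟩
  refine (fun hp h1 h2 => List.Perm.eq_of_pairwise' (r := (· < ·)) h1 h2 hp) ?_ ?_ ?_
  · apply List.perm_of_nodup_nodup_toFinset_eq
    · exact List.Nodup.map σ.injective
        ((List.drop_sublist _ _).nodup (List.nodup_finRange n))
    · exact ((List.filter_sublist).nodup (List.nodup_finRange n))
    · ext v
      simp only [List.mem_toFinset, List.mem_map, List.mem_filter, mem_drop_finRange,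
        List.mem_finRange, true_and, Bool.not_eq_true', decide_eq_false_iff_not, not_lt]
      constructor
      · rintro ⟨q, hq, rfl⟩
        rwa [Equiv.symm_apply_apply]
      · intro h
        exact ⟨σ.symm v, h, σ.apply_symm_apply v⟩
  · show List.Pairwise _ _
    rw [List.pairwise_iff_getElem]
    intro i1 i2 h1 h2 h12
    have hl : (((List.finRange n).drop j).map σ).length = n - j := by
      rw [List.length_map, List.length_drop, List.length_finRange]
    rw [hl] at h1 h2
    have e1 : (((List.finRange n).drop j).map σ)[i1]'(by rw [hl]; exact h1)
        = σ ⟨j + i1, by omega⟩ := by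
      rw [List.getElem_map, List.getElem_drop, List.getElem_finRange]
      rfl
    have e2 : (((List.finRange n).drop j).map σ)[i2]'(by rw [hl]; exact h2)
        = σ ⟨j + i2, by omega⟩ := by
      rw [List.getElem_map, List.getElem_drop, List.getElem_finRange]
      rfl
    rw [e1, e2]
    exact hσ.2 _ _ (by simpa [Fin.lt_def] using h12) (by simp)
  · show List.Pairwise _ _
    exact (List.Pairwise.sublist (List.filter_sublist) (List.pairwise_lt_finRange n))

theorem koszul_eq (p : Fin n → ZMod 2) (j : ℕ) (σ : Equiv.Perm (Fin n))
    (hσ : IsShuffle j σ) :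
    koszulSign p σ = ksgn p (fun v => decide ((σ.symm v : ℕ) < j)) := by
  unfold koszulSign ksgn
  refine Finset.prod_nbij' (fun q => (σ q.1, σ q.2)) (fun q => (σ.symm q.1, σ.symm q.2))
    ?_ ?_ ?_ ?_ ?_
  · intro q hq
    simp only [Finset.mem_filter, Finset.mem_univ, true_and] at hq ⊢
    obtain ⟨h12, h21⟩ := hq
    have hq1 : (q.1 : ℕ) < j := by
      by_contra hcon
      exact absurd h21 (asymm (hσ.2 q.1 q.2 h12 (not_lt.mp hcon)))
    have hq2 : ¬ ((q.2 : ℕ) < j) := by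
      intro hcon
      exact absurd h21 (asymm (hσ.1 q.1 q.2 h12 hcon))
    refine ⟨?_, ?_, h21⟩
    · simp [Equiv.symm_apply_apply, hq1]
    · simp [Equiv.symm_apply_apply, hq2]
  · intro u hu
    simp only [Finset.mem_filter, Finset.mem_univ, true_and, decide_eq_true_eq] at hu ⊢
    obtain ⟨h1, h2, h3⟩ := hu
    have h2' : ¬ ((σ.symm u.2 : ℕ) < j) := by simpa using h2
    refine ⟨?_, ?_⟩
    · rw [Fin.lt_def]
      have := not_lt.mp h2'
      omega
    · rw [Equiv.apply_symm_apply, Equiv.apply_symm_apply]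
      exact h3
  · intro q _
    exact Prod.ext (by simp) (by simp)
  · intro u _
    exact Prod.ext (by simp) (by simp)
  · intro q _
    rfl

theorem jlen_cOf (j : ℕ) (hj : j ≤ n) (σ : Equiv.Perm (Fin n)) (hσ : IsShuffle j σ) :
    jlen (fun v => decide ((σ.symm v : ℕ) < j)) = j := by
  have h := congrArg List.length (shuffle_take j hj σ hσ)
  rw [List.length_map, List.length_take, List.length_finRange, min_eq_left hj] at h
  exact h.symm

theorem cList_cOf (j : ℕ) (hj : j ≤ n) (σ : Equiv.Perm (Fin n)) (hσ : IsShuffle j σ) :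
    cList (fun v => decide ((σ.symm v : ℕ) < j)) = (List.finRange n).map σ := by
  rw [cList, ← shuffle_take j hj σ hσ, ← shuffle_drop j hj σ hσ,
    ← List.map_append, List.take_append_drop]

theorem cPerm_cOf (j : ℕ) (hj : j ≤ n) (σ : Equiv.Perm (Fin n)) (hσ : IsShuffle j σ) :
    cPerm (fun v => decide ((σ.symm v : ℕ) < j)) = σ := by
  apply Equiv.ext
  intro q
  rw [cPerm_apply]
  have hl := cList_cOf j hj σ hσ
  show (cList (fun v => decide ((σ.symm v : ℕ) < j)))[(q : ℕ)]'_ = σ q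
  simp only [hl, List.getElem_map, List.getElem_finRange]
  congr 1

theorem cOf_cPerm (c : Fin n → Bool) :
    (fun v => decide (((cPerm c).symm v : ℕ) < jlen c)) = c := by
  funext v
  have hv : cPerm c ((cPerm c).symm v) = v := Equiv.apply_symm_apply _ _
  by_cases h : (((cPerm c).symm v : ℕ) < jlen c)
  · have hmem : v ∈ (List.finRange n).filter c := by
      rw [← hv, cPerm_apply]
      show ((List.finRange n).filter c ++
        (List.finRange n).filter (fun w => !c w))[(((cPerm c).symm v : Fin n) : ℕ)]'_ ∈ _
      erw [List.getElem_append_left h]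
      exact List.getElem_mem _
    have hcv : c v = true := (List.mem_filter.mp hmem).2
    simp [h, hcv]
  · have hq2 : jlen c ≤ (((cPerm c).symm v : Fin n) : ℕ) := not_lt.mp h
    have hmem : v ∈ (List.finRange n).filter (fun w => !c w) := by
      rw [← hv, cPerm_apply]
      show ((List.finRange n).filter c ++
        (List.finRange n).filter (fun w => !c w))[(((cPerm c).symm v : Fin n) : ℕ)]'_ ∈ _
      erw [List.getElem_append_right hq2]
      exact List.getElem_mem _
    have hcv := (List.mem_filter.mp hmem).2
    have hcv' : c v = false := by revert hcv; cases c v <;> simp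
    simp [h, hcv']

theorem dbr_eq (L : LieSuper k G) (P : G →ₗ[k] G) (D : G) (l : List G) :
    dbr L P D l = P (F L D l) := rfl

theorem bridge1 (L : LieSuper k G) (P : G →ₗ[k] G) (D : G)
    (p : Fin n → ZMod 2) (a : Fin n → G) :
    jacobiator L P D p a =
      ∑ c : Fin n → Bool, ksgn p c •
        P (F L (L.br D (P (F L D (mfst (sel a p c true))))) (mfst (sel a p c false))) := by
  unfold jacobiator
  rw [Finset.sum_sigma']
  refine Finset.sum_nbij' (fun x => fun v => decide ((x.2.symm v : ℕ) < x.1))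
    (fun c => ⟨jlen c, cPerm c⟩) ?_ ?_ ?_ ?_ ?_
  · intro x _
    exact Finset.mem_univ _
  · intro c _
    rw [Finset.mem_sigma, Finset.mem_range, Finset.mem_filter]
    exact ⟨Nat.lt_succ_of_le (jlen_le c), Finset.mem_univ _, cPerm_shuffle c⟩
  · rintro ⟨j, σ⟩ hx
    rw [Finset.mem_sigma, Finset.mem_range, Finset.mem_filter] at hx
    obtain ⟨hj, _, hσ⟩ := hx
    have hj' : j ≤ n := Nat.lt_succ_iff.mp hj
    exact Sigma.ext (jlen_cOf j hj' σ hσ) (heq_of_eq (cPerm_cOf j hj' σ hσ))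
  · intro c _
    exact cOf_cPerm c
  · rintro ⟨j, σ⟩ hx
    rw [Finset.mem_sigma, Finset.mem_range, Finset.mem_filter] at hx
    obtain ⟨hj, _, hσ⟩ := hx
    have hj' : j ≤ n := Nat.lt_succ_iff.mp hj
    have e1 : mfst (sel a p (fun v => decide ((σ.symm v : ℕ) < j)) true)
        = ((List.finRange n).take j).map (fun i => a (σ i)) := by
      rw [mfst, sel, List.map_map]
      have hpred : (fun i => (fun v => decide ((σ.symm v : ℕ) < j)) i == true)
          = (fun v => decide ((σ.symm v : ℕ) < j)) := by
        funext v; simp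
      rw [hpred, ← shuffle_take j hj' σ hσ, List.map_map]
      rfl
    have e2 : mfst (sel a p (fun v => decide ((σ.symm v : ℕ) < j)) false)
        = ((List.finRange n).drop j).map (fun i => a (σ i)) := by
      rw [mfst, sel, List.map_map]
      have hpred : (fun i => (fun v => decide ((σ.symm v : ℕ) < j)) i == false)
          = (fun v => !(decide ((σ.symm v : ℕ) < j))) := by
        funext v; simp
      rw [hpred, ← shuffle_drop j hj' σ hσ, List.map_map]
      rfl
    rw [koszul_eq p j σ hσ, dbr_eq, dbr_eq, e1, e2]
    rfl

end Bridge

/-- Higher derived brackets, abstract form: for a Lie superalgebra `𝔤`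
with a projector `P` whose image is an abelian subalgebra and whose kernel is a
subalgebra, and an odd `Δ ∈ 𝔤`, the `n`-th Jacobiator of the derived brackets of `Δ`
equals the `n`-th derived bracket of `Δ² = ½[Δ,Δ]`. -/
theorem stmt10 [CharZero k] (L : LieSuper k G) (P : G →ₗ[k] G)
    (hP : ∀ x, P (P x) = P x)
    (hPgr : ∀ (i : ZMod 2) (x : G), x ∈ L.gr i → P x ∈ L.gr i)
    (hker : ∀ x y, P x = 0 → P y = 0 → P (L.br x y) = 0)
    (habel : ∀ x y, L.br (P x) (P y) = 0)
    (D : G) (hD : D ∈ L.gr 1)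
    (n : ℕ) (p : Fin n → ZMod 2) (a : Fin n → G)
    (ha : ∀ i, a i ∈ L.gr (p i) ∧ P (a i) = a i) :
    jacobiator L P D p a = dbr L P ((1 / 2 : k) • L.br D D) (List.ofFn a) := by
  rw [bridge1]
  rw [bridge2 n a p (fun x y => P (F L (L.br D (P (F L D (mfst x)))) (mfst y)))]
  rw [listMain L P hP hPgr hker habel D hD (List.ofFn fun i => (a i, p i))
    (by
      intro e he
      rw [List.mem_ofFn] at he
      obtain ⟨i, rfl⟩ := he
      exact ha i)]
  rw [dbr]
  congr 1
  show F L _ (mfst (List.ofFn fun i => (a i, p i))) = _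
  rw [mfst, List.map_ofFn]
  rfl
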